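/- Let A be a bounded self-adjoint operator with nonnegative entries on ℓ²(V), r(A) its spectral radius, o ∈ V with f_{oo}(1/r(A)) = ∑_n (A^n)_{oo} r(A)^{-n} < ∞, and set σ_{ℓ²} = r(A)/f_{oo}(1/r(A)). For σ > σ_{ℓ²}, the operator H = A + σ 1_o 1_o* has spectral radius r_σ > r(A) given by the unique solution t = 1/r_σ ∈ (0, 1/r(A)) of σ t f_{oo}(t) = 1, the point r_σ is an isolated eigenvalue of H, and the corresponding eigenspace is one-dimensional, spanned by the function x ↦ f_{ox}(1/r_σ), which lies in ℓ²(V). -/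

import Mathlib

set_option synthInstance.maxHeartbeats 1000000
set_option maxHeartbeats 4000000

open Filter Topology
open scoped RealInnerProductSpace

lemma rops_cs_form {E : Type*} [NormedAddCommGroup E] [InnerProductSpace ℝ E]
    (B : E →L[ℝ] E) (hpos : ∀ z, 0 ≤ ⟪z, B z⟫) (hsymm : ∀ x y, ⟪B x, y⟫ = ⟪x, B y⟫)
    (u x : E) : ⟪u, B x⟫ ^ 2 ≤ ⟪u, B u⟫ * ⟪x, B x⟫ := by
  have key : ∀ c : ℝ, 0 ≤ ⟪x, B x⟫ * (c * c) + (2 * ⟪u, B x⟫) * c + ⟪u, B u⟫ := by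
    intro c
    have h := hpos (u + c • x)
    have hxBu : ⟪x, B u⟫ = ⟪u, B x⟫ := by
      rw [← hsymm x u, real_inner_comm]
    calc (0:ℝ) ≤ ⟪u + c • x, B (u + c • x)⟫ := h
      _ = ⟪x, B x⟫ * (c * c) + (2 * ⟪u, B x⟫) * c + ⟪u, B u⟫ := by
          rw [map_add, map_smul, inner_add_left, inner_add_right, inner_add_right,
            real_inner_smul_left, real_inner_smul_left, real_inner_smul_right,
            real_inner_smul_right, hxBu]
          ring
  have hd := discrim_le_zero key
  rw [discrim] at hd
  nlinarith [hd]

lemma rops_norm_le {E : Type*} [NormedAddCommGroup E] [InnerProductSpace ℝ E]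
    (T : E →L[ℝ] E) (hsymm : ∀ x y, ⟪T x, y⟫ = ⟪x, T y⟫) (ρ : ℝ) (hρ : 0 ≤ ρ)
    (hbd : ∀ x, |⟪x, T x⟫| ≤ ρ * ‖x‖ ^ 2) : ‖T‖ ≤ ρ := by
  have step1 : ∀ x z : E, ⟪x, T z⟫ ≤ ρ / 2 * (‖x‖ ^ 2 + ‖z‖ ^ 2) := by
    intro x z
    have h4 : 4 * ⟪x, T z⟫ = ⟪x + z, T (x + z)⟫ - ⟪x - z, T (x - z)⟫ := by
      have hzx : ⟪z, T x⟫ = ⟪x, T z⟫ := by rw [← hsymm x z, real_inner_comm]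
      rw [map_add, map_sub, inner_add_left, inner_add_right, inner_add_right,
        inner_sub_left, inner_sub_right, inner_sub_right, hzx]
      ring
    have h1 := (abs_le.1 (hbd (x + z))).2
    have h2 := (neg_le.1 (abs_le.1 (hbd (x - z))).1)
    have hpar : ‖x + z‖ ^ 2 + ‖x - z‖ ^ 2 = 2 * (‖x‖ ^ 2 + ‖z‖ ^ 2) := by
      rw [norm_add_sq_real, norm_sub_sq_real]; ring
    nlinarith [h1, h2, hpar, h4]
  refine T.opNorm_le_bound hρ fun y => ?_
  by_cases hTy : T y = 0
  · rw [hTy, norm_zero]; positivity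
  have hTy' : 0 < ‖T y‖ := norm_pos_iff.2 hTy
  by_cases hy : y = 0
  · simp [hy] at hTy
  have hy' : 0 < ‖y‖ := norm_pos_iff.2 hy
  set b : ℝ := Real.sqrt (‖y‖ / ‖T y‖) with hb
  have hb0 : 0 < b := Real.sqrt_pos.2 (by positivity)
  have hb2 : b ^ 2 = ‖y‖ / ‖T y‖ := Real.sq_sqrt (by positivity)
  have h := step1 (b • T y) (b⁻¹ • y)
  rw [map_smul, real_inner_smul_left, real_inner_smul_right, norm_smul, norm_smul,
    real_inner_self_eq_norm_sq] at h
  have hbb : b * (b⁻¹ * ‖T y‖ ^ 2) = ‖T y‖ ^ 2 := by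
    field_simp
  rw [hbb] at h
  have hnorms : ‖b‖ = b := abs_of_pos hb0
  have hnorms' : ‖b⁻¹‖ = b⁻¹ := abs_of_pos (by positivity)
  rw [hnorms, hnorms'] at h
  have hexp : ρ / 2 * ((b * ‖T y‖) ^ 2 + (b⁻¹ * ‖y‖) ^ 2) = ρ * (‖T y‖ * ‖y‖) := by
    have : (b:ℝ) ≠ 0 := ne_of_gt hb0
    rw [mul_pow, mul_pow, inv_pow, hb2]
    field_simp
    ring
  rw [hexp] at h
  nlinarith [h, hTy', hy']

lemma rops_resolvent {E : Type*} [NormedAddCommGroup E] [InnerProductSpace ℝ E]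
    [CompleteSpace E] (A : E →L[ℝ] E) (v : E) (μ : ℝ) (hμ0 : 0 < μ) (hμ : ‖A‖ < μ) :
    ∃ w : (E →L[ℝ] E)ˣ, (↑w : E →L[ℝ] E) = μ • 1 - A ∧
      Summable (fun n : ℕ => (μ⁻¹) ^ n • (A ^ n) v) ∧
      (↑w⁻¹ : E →L[ℝ] E) v = μ⁻¹ • ∑' n : ℕ, (μ⁻¹) ^ n • (A ^ n) v := by
  have hμne : μ ≠ 0 := ne_of_gt hμ0
  have h1 : ‖μ⁻¹ • A‖ < 1 := by
    rw [norm_smul μ⁻¹ A, norm_inv, Real.norm_of_nonneg hμ0.le, inv_mul_lt_iff₀ hμ0, mul_one]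
    exact hμ
  set T : E →L[ℝ] E := μ⁻¹ • A with hT
  have hTnv : ∀ n : ℕ, (T ^ n) v = (μ⁻¹) ^ n • (A ^ n) v := by
    intro n
    rw [hT, smul_pow, ContinuousLinearMap.smul_apply]
  have hscal : μ⁻¹ • (μ • (1 : E →L[ℝ] E) - A) = 1 - T := by
    rw [smul_sub, smul_smul, inv_mul_cancel₀ hμne, one_smul]
  set u0 := Units.oneSub T h1 with hu0
  have hsummT : Summable fun n : ℕ => T ^ n := summable_geometric_of_norm_lt_one h1
  have hsummTv : Summable fun n : ℕ => (T ^ n) v :=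
    (hsummT.hasSum.mapL (ContinuousLinearMap.apply ℝ E v)).summable
  have hval : (∑' n : ℕ, T ^ n) v = ∑' n : ℕ, (T ^ n) v :=
    (hsummT.hasSum.mapL (ContinuousLinearMap.apply ℝ E v)).tsum_eq.symm
  refine ⟨⟨μ • 1 - A, μ⁻¹ • (↑u0⁻¹ : E →L[ℝ] E), ?_, ?_⟩, rfl, ?_, ?_⟩
  · rw [mul_smul_comm, ← smul_mul_assoc, hscal]
    show (u0 : E →L[ℝ] E) * ↑u0⁻¹ = 1
    exact u0.mul_inv
  · rw [smul_mul_assoc, ← mul_smul_comm, hscal]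
    show (↑u0⁻¹ : E →L[ℝ] E) * ↑u0 = 1
    exact u0.inv_mul
  · exact hsummTv.congr hTnv
  · show (μ⁻¹ • (↑u0⁻¹ : E →L[ℝ] E)) v = _
    have hinv : (↑u0⁻¹ : E →L[ℝ] E) = ∑' n : ℕ, T ^ n := rfl
    rw [ContinuousLinearMap.smul_apply, hinv, hval]
    congr 1
    exact tsum_congr hTnv

lemma rops_inner_tsum {E : Type*} [NormedAddCommGroup E] [InnerProductSpace ℝ E]
    [CompleteSpace E] (v : E) (f : ℕ → E) (hf : Summable f) :
    ⟪v, ∑' n, f n⟫ = ∑' n, ⟪v, f n⟫ :=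
  ((hf.hasSum.mapL (innerSL ℝ v)).tsum_eq).symm

/-- rank-one perturbation of a nonnegative irreducible bounded self-adjoint
operator `A` on `ℓ²(V)` (presented abstractly via an orthonormal family `e : V → E` whose
span is dense, with nonnegative matrix entries). With `f_{oo}(1/r(A)) < ∞` (where
`r(A) = ‖A‖` is the spectral radius of the self-adjoint `A`) and
`σ > σ_{ℓ²} = r(A)/f_{oo}(1/r(A))`, the operator `H = A + σ 1_o 1_o*` has spectral radius
`r_σ = ‖H‖ > r(A)`, given as the unique solution `t = 1/r_σ ∈ (0, 1/r(A))` of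
`σ t f_{oo}(t) = 1`; `r_σ` is an isolated point of the spectrum of `H`, it is an eigenvalue
with one-dimensional eigenspace spanned by `φ = ∑_n r_σ^{-n} A^n 1_o` (the generalized
Green function `x ↦ f_{ox}(1/r_σ)`), which lies in `ℓ²(V)`. -/
theorem rank_one_perturbation_spectral
    {V : Type*} {E : Type*} [NormedAddCommGroup E] [InnerProductSpace ℝ E]
    [CompleteSpace E]
    (A : E →L[ℝ] E) (hA : IsSelfAdjoint A)
    (e : V → E) (he : Orthonormal ℝ e)
    (htotal : (Submodule.span ℝ (Set.range e)).topologicalClosure = ⊤)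
    (hnn : ∀ (x y : V) (n : ℕ), 0 ≤ ⟪e x, (A ^ n) (e y)⟫)
    (hirr : ∀ x y : V, ∃ n : ℕ, 0 < ⟪e x, (A ^ n) (e y)⟫)
    (o : V) (hAnorm : 0 < ‖A‖)
    (hsum : Summable (fun n : ℕ => ⟪e o, (A ^ n) (e o)⟫ * (‖A‖⁻¹)^n))
    (σ : ℝ)
    (hσ : σ > ‖A‖ / ∑' n : ℕ, ⟪e o, (A ^ n) (e o)⟫ * (‖A‖⁻¹)^n)
    (H : E →L[ℝ] E)
    (hHdef : H = A + σ • ((innerSL ℝ (e o)).smulRight (e o))) :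
    ‖A‖ < ‖H‖ ∧
    (σ * ‖H‖⁻¹ * ∑' n : ℕ, ⟪e o, (A ^ n) (e o)⟫ * (‖H‖⁻¹)^n = 1) ∧
    (∀ t : ℝ, t ∈ Set.Ioo 0 ‖A‖⁻¹ →
      σ * t * (∑' n : ℕ, ⟪e o, (A ^ n) (e o)⟫ * t^n) = 1 → t = ‖H‖⁻¹) ∧
    ‖H‖ ∈ spectrum ℝ H ∧
    (∃ ε > 0, spectrum ℝ H ∩ Set.Ioo (‖H‖ - ε) (‖H‖ + ε) = {‖H‖}) ∧
    Summable (fun n : ℕ => (‖H‖⁻¹)^n • ((A ^ n) (e o))) ∧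
    (let φ : E := ∑' n : ℕ, (‖H‖⁻¹)^n • ((A ^ n) (e o));
      φ ≠ 0 ∧ H φ = ‖H‖ • φ ∧ ∀ ψ : E, H ψ = ‖H‖ • ψ → ∃ c : ℝ, ψ = c • φ) := by
  -- notation
  have hr0 : (0:ℝ) < ‖A‖⁻¹ := inv_pos.2 hAnorm
  have ha0 : ⟪e o, ((A : E →L[ℝ] E) ^ 0) (e o)⟫ = 1 := by
    rw [pow_zero, ContinuousLinearMap.one_apply, real_inner_self_eq_norm_sq, he.1 o, one_pow]
  have han : ∀ n : ℕ, 0 ≤ ⟪e o, (A ^ n) (e o)⟫ := hnn o o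
  -- summability of the series for 0 ≤ t ≤ ‖A‖⁻¹
  have hSsum : ∀ t : ℝ, 0 ≤ t → t ≤ ‖A‖⁻¹ →
      Summable (fun n : ℕ => ⟪e o, (A ^ n) (e o)⟫ * t ^ n) := by
    intro t ht h't
    refine Summable.of_nonneg_of_le (fun n => mul_nonneg (han n) (pow_nonneg ht n))
      (fun n => ?_) hsum
    exact mul_le_mul_of_nonneg_left (pow_le_pow_left₀ ht h't n) (han n)
  -- the series is at least 1
  have hS1 : ∀ t : ℝ, 0 ≤ t → t ≤ ‖A‖⁻¹ →
      1 ≤ ∑' n : ℕ, ⟪e o, (A ^ n) (e o)⟫ * t ^ n := by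
    intro t ht h't
    have := Summable.le_tsum (hSsum t ht h't) 0
      (fun j _ => mul_nonneg (han j) (pow_nonneg ht j))
    rwa [ha0, pow_zero, one_mul] at this
  -- monotonicity of the series itself
  have hSmono : ∀ s t : ℝ, 0 ≤ s → s ≤ t → t ≤ ‖A‖⁻¹ →
      (∑' n : ℕ, ⟪e o, (A ^ n) (e o)⟫ * s ^ n) ≤ ∑' n : ℕ, ⟪e o, (A ^ n) (e o)⟫ * t ^ n := by
    intro s t hs hst ht
    refine Summable.tsum_le_tsum (fun n => ?_) (hSsum s hs (hst.trans ht)) (hSsum t (hs.trans hst) ht)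
    exact mul_le_mul_of_nonneg_left (pow_le_pow_left₀ hs hst n) (han n)
  -- strict monotonicity of t * S t
  have hgmono : ∀ s t : ℝ, 0 ≤ s → s < t → t ≤ ‖A‖⁻¹ →
      s * ∑' n : ℕ, ⟪e o, (A ^ n) (e o)⟫ * s ^ n <
        t * ∑' n : ℕ, ⟪e o, (A ^ n) (e o)⟫ * t ^ n := by
    intro s t hs hst ht
    rw [← tsum_mul_left, ← tsum_mul_left]
    refine Summable.tsum_lt_tsum (i := 0) (fun n => ?_) ?_
      ((hSsum s hs (hst.le.trans ht)).mul_left s) ((hSsum t (hs.trans hst.le) ht).mul_left t)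
    · have h1 : s * s ^ n ≤ t * t ^ n := by
        calc s * s ^ n = s ^ (n + 1) := (pow_succ' s n).symm
          _ ≤ t ^ (n + 1) := pow_le_pow_left₀ hs hst.le (n + 1)
          _ = t * t ^ n := pow_succ' t n
      calc s * (⟪e o, (A ^ n) (e o)⟫ * s ^ n) = ⟪e o, (A ^ n) (e o)⟫ * (s * s ^ n) := by ring
        _ ≤ ⟪e o, (A ^ n) (e o)⟫ * (t * t ^ n) := mul_le_mul_of_nonneg_left h1 (han n)
        _ = t * (⟪e o, (A ^ n) (e o)⟫ * t ^ n) := by ring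
    · rw [ha0, pow_zero, pow_zero]
      simpa using hst
  -- positivity of σ
  have hSr1 : 1 ≤ ∑' n : ℕ, ⟪e o, (A ^ n) (e o)⟫ * (‖A‖⁻¹) ^ n := hS1 _ hr0.le le_rfl
  have hSrpos : 0 < ∑' n : ℕ, ⟪e o, (A ^ n) (e o)⟫ * (‖A‖⁻¹) ^ n := lt_of_lt_of_le one_pos hSr1
  have hσ0 : 0 < σ := lt_trans (div_pos hAnorm hSrpos) hσ
  -- value at the right endpoint is > 1
  have hg_r : 1 < σ * (‖A‖⁻¹ * ∑' n : ℕ, ⟪e o, (A ^ n) (e o)⟫ * (‖A‖⁻¹) ^ n) := by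
    have h1 : ‖A‖ < σ * ∑' n : ℕ, ⟪e o, (A ^ n) (e o)⟫ * (‖A‖⁻¹) ^ n :=
      (div_lt_iff₀ hSrpos).1 hσ
    have h2 : ‖A‖ * ‖A‖⁻¹ = 1 := mul_inv_cancel₀ (ne_of_gt hAnorm)
    nlinarith [h1, h2, hr0]
  -- find t₀ < ‖A‖⁻¹ with value > 1
  obtain ⟨t₀, ht₀p, ht₀lt, ht₀gt⟩ :
      ∃ t₀ : ℝ, 0 < t₀ ∧ t₀ < ‖A‖⁻¹ ∧
        1 < σ * (t₀ * ∑' n : ℕ, ⟪e o, (A ^ n) (e o)⟫ * t₀ ^ n) := by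
    -- choose N with partial sum big enough
    have htend : Tendsto (fun N : ℕ => σ * (‖A‖⁻¹ *
        ∑ n ∈ Finset.range N, ⟪e o, (A ^ n) (e o)⟫ * (‖A‖⁻¹) ^ n)) atTop
        (𝓝 (σ * (‖A‖⁻¹ * ∑' n : ℕ, ⟪e o, (A ^ n) (e o)⟫ * (‖A‖⁻¹) ^ n))) :=
      ((hsum.hasSum.tendsto_sum_nat).const_mul (‖A‖⁻¹)).const_mul σ
    obtain ⟨N, hN⟩ := (htend.eventually (eventually_gt_nhds hg_r)).exists
    set p : ℝ → ℝ := fun t => σ * (t * ∑ n ∈ Finset.range N, ⟪e o, (A ^ n) (e o)⟫ * t ^ n)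
      with hp
    have hpc : Continuous p := by
      apply continuous_const.mul
      exact continuous_id.mul (continuous_finset_sum _ fun i _ =>
        continuous_const.mul (continuous_pow i))
    have h1 : ∀ᶠ t in 𝓝[<] (‖A‖⁻¹), 1 < p t :=
      eventually_nhdsWithin_of_eventually_nhds (hpc.continuousAt.eventually (eventually_gt_nhds hN))
    have h2 : ∀ᶠ t in 𝓝[<] (‖A‖⁻¹), 0 < t :=
      eventually_nhdsWithin_of_eventually_nhds (eventually_gt_nhds hr0)
    have h3 : ∀ᶠ t in 𝓝[<] (‖A‖⁻¹), t < ‖A‖⁻¹ := eventually_mem_nhdsWithin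
    obtain ⟨t₀, ht⟩ := ((h1.and h2).and h3).exists
    have hpt : 1 < σ * (t₀ * ∑ n ∈ Finset.range N, ⟪e o, (A ^ n) (e o)⟫ * t₀ ^ n) := ht.1.1
    have hsums := Summable.sum_le_tsum (Finset.range N)
      (fun i _ => mul_nonneg (han i) (pow_nonneg ht.1.2.le i)) (hSsum t₀ ht.1.2.le ht.2.le)
    have hmul : σ * (t₀ * ∑ n ∈ Finset.range N, ⟪e o, (A ^ n) (e o)⟫ * t₀ ^ n) ≤
        σ * (t₀ * ∑' n : ℕ, ⟪e o, (A ^ n) (e o)⟫ * t₀ ^ n) :=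
      mul_le_mul_of_nonneg_left (mul_le_mul_of_nonneg_left hsums ht.1.2.le) hσ0.le
    exact ⟨t₀, ht.1.2, ht.2, lt_of_lt_of_le hpt hmul⟩
  -- find a small point where the value is < 1
  set M : ℝ := ∑' n : ℕ, ⟪e o, (A ^ n) (e o)⟫ * t₀ ^ n with hM
  have hMpos : 0 < M := lt_of_lt_of_le one_pos (hS1 t₀ ht₀p.le ht₀lt.le)
  set c : ℝ := min (t₀ / 2) ((2 * σ * M)⁻¹) with hc
  have hc0 : 0 < c := lt_min (by linarith) (by positivity)
  have hct₀ : c < t₀ := lt_of_le_of_lt (min_le_left _ _) (by linarith)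
  have hgc : σ * (c * ∑' n : ℕ, ⟪e o, (A ^ n) (e o)⟫ * c ^ n) < 1 := by
    have h1 : (∑' n : ℕ, ⟪e o, (A ^ n) (e o)⟫ * c ^ n) ≤ M :=
      hSmono c t₀ hc0.le hct₀.le ht₀lt.le
    have h2 : c ≤ (2 * σ * M)⁻¹ := min_le_right _ _
    have h3 : σ * (c * ∑' n : ℕ, ⟪e o, (A ^ n) (e o)⟫ * c ^ n) ≤ σ * (c * M) :=
      mul_le_mul_of_nonneg_left (mul_le_mul_of_nonneg_left h1 hc0.le) hσ0.le
    have h4 : σ * (c * M) ≤ σ * ((2 * σ * M)⁻¹ * M) :=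
      mul_le_mul_of_nonneg_left (mul_le_mul_of_nonneg_right h2 hMpos.le) hσ0.le
    have h5 : σ * ((2 * σ * M)⁻¹ * M) = 1 / 2 := by
      field_simp
    linarith
  -- continuity of the series on [0, t₀]
  have hScont : ContinuousOn (fun t : ℝ => ∑' n : ℕ, ⟪e o, (A ^ n) (e o)⟫ * t ^ n)
      (Set.Icc 0 t₀) := by
    refine continuousOn_tsum (fun n => ((continuous_const.mul (continuous_pow n)).continuousOn))
      (hSsum t₀ ht₀p.le ht₀lt.le) ?_
    intro n t htmem
    rw [Real.norm_eq_abs, abs_mul, abs_of_nonneg (han n), abs_pow]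
    refine mul_le_mul_of_nonneg_left ?_ (han n)
    rw [abs_of_nonneg htmem.1]
    exact pow_le_pow_left₀ htmem.1 htmem.2 n
  have hgcont : ContinuousOn (fun t : ℝ => σ * (t * ∑' n : ℕ, ⟪e o, (A ^ n) (e o)⟫ * t ^ n))
      (Set.Icc c t₀) := by
    refine ContinuousOn.mono ?_ (Set.Icc_subset_Icc_left hc0.le)
    exact continuousOn_const.mul (continuousOn_id.mul hScont)
  -- IVT
  obtain ⟨ts, htsmem, hgts⟩ : ∃ ts ∈ Set.Icc c t₀,
      σ * (ts * ∑' n : ℕ, ⟪e o, (A ^ n) (e o)⟫ * ts ^ n) = 1 := by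
    have := intermediate_value_Icc hct₀.le hgcont
    have h1mem : (1:ℝ) ∈ Set.Icc
        (σ * (c * ∑' n : ℕ, ⟪e o, (A ^ n) (e o)⟫ * c ^ n))
        (σ * (t₀ * ∑' n : ℕ, ⟪e o, (A ^ n) (e o)⟫ * t₀ ^ n)) := ⟨hgc.le, ht₀gt.le⟩
    obtain ⟨ts, hts1, hts2⟩ := this h1mem
    exact ⟨ts, hts1, hts2⟩
  have hts0 : 0 < ts := lt_of_lt_of_le hc0 htsmem.1
  have htslt : ts < ‖A‖⁻¹ := lt_of_le_of_lt htsmem.2 ht₀lt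
  -- the spectral radius of H
  set ρ : ℝ := ts⁻¹ with hρdef
  have hρ0 : 0 < ρ := inv_pos.2 hts0
  have hρr : ‖A‖ < ρ := by
    have := inv_strictAnti₀ hts0 htslt
    rwa [inv_inv] at this
  have hρinv : ρ⁻¹ = ts := inv_inv ts
  have hρts : ρ * ts = 1 := inv_mul_cancel₀ (ne_of_gt hts0)
  -- uniqueness of the solution
  have huniq_t : ∀ t : ℝ, 0 < t → t < ‖A‖⁻¹ →
      σ * (t * ∑' n : ℕ, ⟪e o, (A ^ n) (e o)⟫ * t ^ n) = 1 → t = ts := by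
    intro t ht0 htlt hgt
    rcases lt_trichotomy t ts with h | h | h
    · exfalso
      have := hgmono t ts ht0.le h htslt.le
      have h2 := mul_lt_mul_of_pos_left this hσ0
      rw [hgt, hgts] at h2
      exact lt_irrefl 1 h2
    · exact h
    · exfalso
      have := hgmono ts t hts0.le h htlt.le
      have h2 := mul_lt_mul_of_pos_left this hσ0
      rw [hgt, hgts] at h2
      exact lt_irrefl 1 h2
  -- resolvent at ρ
  obtain ⟨w, hwval, hφsum, hwinv⟩ := rops_resolvent A (e o) ρ hρ0 hρr
  set φ : E := ∑' n : ℕ, (ρ⁻¹) ^ n • (A ^ n) (e o) with hφdef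
  have hwinv' : (↑w⁻¹ : E →L[ℝ] E) (e o) = ts • φ := by rw [hwinv, hρinv]
  -- inner product of e o with φ
  have hφinner : ⟪e o, φ⟫ = ∑' n : ℕ, ⟪e o, (A ^ n) (e o)⟫ * ts ^ n := by
    rw [hφdef, rops_inner_tsum (e o) _ hφsum]
    refine tsum_congr fun n => ?_
    rw [real_inner_smul_right, hρinv, mul_comm]
  have hφinner1 : 1 ≤ ⟪e o, φ⟫ := by rw [hφinner]; exact hS1 ts hts0.le htslt.le
  have hφne : φ ≠ 0 := by
    intro h
    rw [h, inner_zero_right] at hφinner1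
    linarith
  have hσS : σ * ⟪e o, φ⟫ = ρ := by
    rw [hφinner]
    have h1 : σ * (ts * ∑' n : ℕ, ⟪e o, (A ^ n) (e o)⟫ * ts ^ n) = 1 := hgts
    field_simp [hρdef]
    nlinarith [h1]
  -- the eigenvalue equation
  have hBu : (ρ • (1 : E →L[ℝ] E) - A) (ts • φ) = e o := by
    rw [← hwval, ← hwinv']
    have : (↑w : E →L[ℝ] E) ((↑w⁻¹ : E →L[ℝ] E) (e o)) =
        ((↑w : E →L[ℝ] E) * (↑w⁻¹ : E →L[ℝ] E)) (e o) := rfl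
    rw [this, w.mul_inv, ContinuousLinearMap.one_apply]
  have hAφ : ts • A φ = φ - e o := by
    have h1 : (ρ • (1 : E →L[ℝ] E) - A) (ts • φ) = (ρ * ts) • φ - ts • A φ := by
      rw [ContinuousLinearMap.sub_apply, ContinuousLinearMap.smul_apply,
        ContinuousLinearMap.one_apply, map_smul, smul_smul]
    rw [h1, hρts, one_smul] at hBu
    linear_combination (norm := module) -hBu
  have hHφ : H φ = ρ • φ := by
    have hAφ' : A φ = ρ • φ - ρ • e o := by
      have := congrArg (fun z => ρ • z) hAφ
      simp only [smul_smul, hρdef] at this ⊢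
      rw [inv_mul_cancel₀ (ne_of_gt hts0), one_smul] at this
      rw [this, smul_sub]
    rw [hHdef]
    rw [ContinuousLinearMap.add_apply, ContinuousLinearMap.smul_apply,
      ContinuousLinearMap.smulRight_apply, innerSL_apply_apply, hAφ', smul_smul, hσS]
    abel
  -- symmetry of A and H
  have hAsymm : ∀ x y : E, ⟪A x, y⟫ = ⟪x, A y⟫ := by
    intro x y
    have h1 : ContinuousLinearMap.adjoint A = A := by
      rw [← ContinuousLinearMap.star_eq_adjoint]; exact hA
    conv_lhs => rw [← h1]
    exact ContinuousLinearMap.adjoint_inner_left A y x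
  have hHsymm : ∀ x y : E, ⟪H x, y⟫ = ⟪x, H y⟫ := by
    intro x y
    rw [hHdef]
    rw [ContinuousLinearMap.add_apply, ContinuousLinearMap.add_apply,
      ContinuousLinearMap.smul_apply, ContinuousLinearMap.smul_apply,
      ContinuousLinearMap.smulRight_apply, ContinuousLinearMap.smulRight_apply,
      innerSL_apply_apply, innerSL_apply_apply, inner_add_left, inner_add_right, hAsymm,
      real_inner_smul_left, real_inner_smul_right, real_inner_smul_left,
      real_inner_smul_right, real_inner_comm (e o) x]
    ring
  -- the operator B = ρ - A
  set B : E →L[ℝ] E := ρ • (1 : E →L[ℝ] E) - A with hBdef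
  have hBapp : ∀ z : E, B z = ρ • z - A z := by
    intro z
    rw [hBdef, ContinuousLinearMap.sub_apply, ContinuousLinearMap.smul_apply,
      ContinuousLinearMap.one_apply]
  have hBsymm : ∀ x y : E, ⟪B x, y⟫ = ⟪x, B y⟫ := by
    intro x y
    rw [hBapp, hBapp, inner_sub_left, inner_sub_right, hAsymm,
      real_inner_smul_left, real_inner_smul_right]
  have hBpos : ∀ z : E, 0 ≤ ⟪z, B z⟫ := by
    intro z
    rw [hBapp, inner_sub_right, real_inner_smul_right, real_inner_self_eq_norm_sq]
    have h1 : ⟪z, A z⟫ ≤ ‖A‖ * ‖z‖ ^ 2 := by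
      have h2 := (abs_le.1 (abs_real_inner_le_norm z (A z))).2
      have h3 := A.le_opNorm z
      nlinarith [norm_nonneg z, h2, h3]
    nlinarith [norm_nonneg z, h1, hρr]
  have huBu : ⟪ts • φ, B (ts • φ)⟫ = σ⁻¹ := by
    rw [hBu, real_inner_smul_left, real_inner_comm]
    have h1 : σ * (ts * ⟪e o, φ⟫) = 1 := by rw [hφinner]; exact hgts
    field_simp
    nlinarith [h1]
  -- the quadratic form bound for H
  have hHbd : ∀ x : E, |⟪x, H x⟫| ≤ ρ * ‖x‖ ^ 2 := by
    intro x
    have hHx : ⟪x, H x⟫ = ⟪x, A x⟫ + σ * ⟪e o, x⟫ ^ 2 := by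
      rw [hHdef]
      rw [ContinuousLinearMap.add_apply, ContinuousLinearMap.smul_apply,
        ContinuousLinearMap.smulRight_apply, innerSL_apply_apply, inner_add_right,
        real_inner_smul_right, real_inner_smul_right, real_inner_comm x (e o)]
      ring
    have hAx : |⟪x, A x⟫| ≤ ‖A‖ * ‖x‖ ^ 2 := by
      have h2 := abs_real_inner_le_norm x (A x)
      have h3 := A.le_opNorm x
      have h4 : ‖x‖ * ‖A x‖ ≤ ‖A‖ * ‖x‖ ^ 2 := by nlinarith [norm_nonneg x]
      linarith
    have hcs : σ * ⟪e o, x⟫ ^ 2 ≤ ⟪x, B x⟫ := by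
      have h1 := rops_cs_form B hBpos hBsymm (ts • φ) x
      rw [huBu] at h1
      have h2 : ⟪ts • φ, B x⟫ = ⟪e o, x⟫ := by rw [← hBsymm, hBu]
      rw [h2] at h1
      have h3 : σ * ⟪e o, x⟫ ^ 2 ≤ σ * (σ⁻¹ * ⟪x, B x⟫) :=
        mul_le_mul_of_nonneg_left h1 hσ0.le
      rwa [← mul_assoc, mul_inv_cancel₀ (ne_of_gt hσ0), one_mul] at h3
    have hBx : ⟪x, B x⟫ = ρ * ‖x‖ ^ 2 - ⟪x, A x⟫ := by
      rw [hBapp, inner_sub_right, real_inner_smul_right, real_inner_self_eq_norm_sq]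
    rw [abs_le]
    constructor
    · rw [hHx]
      have h5 : 0 ≤ σ * ⟪e o, x⟫ ^ 2 := mul_nonneg hσ0.le (sq_nonneg _)
      have h6 := (abs_le.1 hAx).1
      nlinarith [norm_nonneg x, hρr, sq_nonneg ‖x‖]
    · rw [hHx]
      rw [hBx] at hcs
      linarith
  have hHle : ‖H‖ ≤ ρ := rops_norm_le H hHsymm ρ hρ0.le hHbd
  have hHge : ρ ≤ ‖H‖ := by
    have h1 : ‖H φ‖ = ρ * ‖φ‖ := by
      rw [hHφ, norm_smul, Real.norm_of_nonneg hρ0.le]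
    have h2 := H.le_opNorm φ
    rw [h1] at h2
    have hφpos : 0 < ‖φ‖ := norm_pos_iff.2 hφne
    exact le_of_mul_le_mul_right (by linarith) hφpos
  have hHnorm : ‖H‖ = ρ := le_antisymm hHle hHge
  have hHinv : ‖H‖⁻¹ = ts := by rw [hHnorm, hρinv]
  have hHinv2 : ‖H‖⁻¹ = ρ⁻¹ := by rw [hHnorm]
  -- Sherman–Morrison: invertibility off the eigenvalue
  have hunit : ∀ lam : ℝ, ‖A‖ < lam → lam ≠ ρ →
      IsUnit (algebraMap ℝ (E →L[ℝ] E) lam - H) := by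
    intro lam hlam hne
    have hlam0 : 0 < lam := lt_trans hAnorm hlam
    obtain ⟨w', hw'val, hsum', hw'inv⟩ := rops_resolvent A (e o) lam hlam0 hlam
    set R : E →L[ℝ] E := ↑w'⁻¹ with hR
    set P : E →L[ℝ] E := (innerSL ℝ (e o)).smulRight (e o) with hP
    have hPapp : ∀ x, P x = ⟪e o, x⟫ • e o := fun x => by
      rw [hP, ContinuousLinearMap.smulRight_apply, innerSL_apply_apply]
    set q : ℝ := ⟪e o, R (e o)⟫ with hq
    have hqval : q = lam⁻¹ * ∑' n : ℕ, ⟪e o, (A ^ n) (e o)⟫ * (lam⁻¹) ^ n := by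
      rw [hq, hR, hw'inv, real_inner_smul_right, rops_inner_tsum (e o) _ hsum']
      congr 1
      exact tsum_congr fun n => by rw [real_inner_smul_right, mul_comm]
    have hlaminv0 : 0 < lam⁻¹ := inv_pos.2 hlam0
    have hlaminvlt : lam⁻¹ < ‖A‖⁻¹ := by
      have := inv_strictAnti₀ hAnorm hlam
      exact this
    have hσq : σ * q ≠ 1 := by
      intro hq1
      have h2 : σ * (lam⁻¹ * ∑' n : ℕ, ⟪e o, (A ^ n) (e o)⟫ * (lam⁻¹) ^ n) = 1 := by
        rw [← hqval]; exact hq1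
      have h3 := huniq_t lam⁻¹ hlaminv0 hlaminvlt h2
      apply hne
      rw [hρdef, ← h3, inv_inv]
    set d : ℝ := 1 - σ * q with hd
    have hd0 : d ≠ 0 := sub_ne_zero_of_ne (Ne.symm hσq)
    set cc : ℝ := σ / d with hcc
    have hccd : cc * d = σ := div_mul_cancel₀ σ hd0
    have hcc0 : cc - σ - σ * (cc * q) = 0 := by
      rw [hd] at hccd
      linear_combination hccd
    have hB'R : ((lam • (1 : E →L[ℝ] E)) - A) * R = 1 := by
      rw [← hw'val, hR]; exact w'.mul_inv
    have hRB' : R * ((lam • (1 : E →L[ℝ] E)) - A) = 1 := by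
      rw [← hw'val, hR]; exact w'.inv_mul
    have hPRP : P * R * P = q • P := by
      ext x
      simp only [ContinuousLinearMap.mul_apply, ContinuousLinearMap.smul_apply, hPapp,
        map_smul, real_inner_smul_right]
      rw [← hq]
      module
    set Mi : E →L[ℝ] E := R + cc • (R * P * R) with hMi
    have halg : algebraMap ℝ (E →L[ℝ] E) lam - H = (lam • (1 : E →L[ℝ] E)) - A - σ • P := by
      rw [Algebra.algebraMap_eq_smul_one, hHdef, hP]
      exact sub_add_eq_sub_sub _ _ _
    have hmul1 : ((lam • (1 : E →L[ℝ] E)) - A - σ • P) * Mi = 1 := by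
      rw [hMi, sub_mul, mul_add, mul_add]
      have e2 : ((lam • (1 : E →L[ℝ] E)) - A) * (cc • (R * P * R)) = cc • (P * R) := by
        rw [mul_smul_comm, ← mul_assoc, ← mul_assoc, hB'R, one_mul]
      have e3 : (σ • P) * R = σ • (P * R) := smul_mul_assoc σ P R
      have e4 : (σ • P) * (cc • (R * P * R)) = (σ * (cc * q)) • (P * R) := by
        rw [smul_mul_assoc, mul_smul_comm, smul_smul, ← mul_assoc, ← mul_assoc, hPRP,
          smul_mul_assoc, smul_smul]
        module
      rw [hB'R, e2, e3, e4]
      have : (1 : E →L[ℝ] E) + cc • (P * R) - (σ • (P * R) + (σ * (cc * q)) • (P * R)) =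
          1 + (cc - σ - σ * (cc * q)) • (P * R) := by module
      rw [this, hcc0, zero_smul, add_zero]
    have hmul2 : Mi * ((lam • (1 : E →L[ℝ] E)) - A - σ • P) = 1 := by
      rw [hMi, add_mul, mul_sub R (lam • (1 : E →L[ℝ] E) - A) (σ • P),
        mul_sub (cc • (R * P * R)) (lam • (1 : E →L[ℝ] E) - A) (σ • P)]
      have e2 : (cc • (R * P * R)) * ((lam • (1 : E →L[ℝ] E)) - A) = cc • (R * P) := by
        rw [smul_mul_assoc, mul_assoc, mul_assoc, hRB', mul_one]
      have e3 : R * (σ • P) = σ • (R * P) := mul_smul_comm σ R P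
      have e4 : (cc • (R * P * R)) * (σ • P) = (σ * (cc * q)) • (R * P) := by
        rw [smul_mul_assoc, mul_smul_comm, smul_smul, mul_assoc, mul_assoc,
          ← mul_assoc P R P, hPRP, mul_smul_comm, smul_smul]
        module
      rw [hRB', e2, e3, e4]
      have : ((1 : E →L[ℝ] E) - σ • (R * P)) + (cc • (R * P) - (σ * (cc * q)) • (R * P)) =
          1 + (cc - σ - σ * (cc * q)) • (R * P) := by module
      rw [this, hcc0, zero_smul, add_zero]
    refine ⟨⟨algebraMap ℝ (E →L[ℝ] E) lam - H, Mi, ?_, ?_⟩, rfl⟩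
    · rw [halg]; exact hmul1
    · rw [halg]; exact hmul2
  -- ρ is in the spectrum
  have hspec : ρ ∈ spectrum ℝ H := by
    rw [spectrum.mem_iff]
    intro hu
    obtain ⟨v, hv⟩ := hu
    have h0 : (algebraMap ℝ (E →L[ℝ] E) ρ - H) φ = 0 := by
      rw [Algebra.algebraMap_eq_smul_one, ContinuousLinearMap.sub_apply,
        ContinuousLinearMap.smul_apply, ContinuousLinearMap.one_apply, hHφ, sub_self]
    have hφ0 : φ = 0 := by
      have h1 : ((↑v⁻¹ : E →L[ℝ] E) * (↑v : E →L[ℝ] E)) φ = φ := by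
        rw [v.inv_mul, ContinuousLinearMap.one_apply]
      rw [ContinuousLinearMap.mul_apply, hv, h0, map_zero] at h1
      exact h1.symm
    exact hφne hφ0
  -- assembling the conclusions
  refine ⟨?_, ?_, ?_, ?_, ?_, ?_, ?_⟩
  · rw [hHnorm]; exact hρr
  · simp only [hHinv]
    rw [mul_assoc]
    exact hgts
  · intro t htIoo hgt
    rw [hHinv]
    rw [mul_assoc] at hgt
    exact huniq_t t htIoo.1 htIoo.2 hgt
  · rw [hHnorm]; exact hspec
  · refine ⟨ρ - ‖A‖, by linarith, ?_⟩
    rw [hHnorm]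
    ext lam
    simp only [Set.mem_inter_iff, Set.mem_Ioo, Set.mem_singleton_iff]
    constructor
    · rintro ⟨hsp, hlo, hhi⟩
      by_contra hne
      have hlam : ‖A‖ < lam := by linarith
      exact (spectrum.notMem_iff.2 (hunit lam hlam hne)) hsp
    · rintro rfl
      exact ⟨hspec, by linarith, by linarith⟩
  · simp only [hHinv2]
    exact hφsum
  · simp only [hHinv2, hHnorm]
    refine ⟨hφne, hHφ, ?_⟩
    intro ψ hψ
    have h1 : (↑w : E →L[ℝ] E) ψ = (σ * ⟪e o, ψ⟫) • e o := by
      rw [hwval, ContinuousLinearMap.sub_apply, ContinuousLinearMap.smul_apply,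
        ContinuousLinearMap.one_apply]
      have h2 : A ψ + (σ * ⟪e o, ψ⟫) • e o = ρ • ψ := by
        rw [← hψ, hHdef, ContinuousLinearMap.add_apply, ContinuousLinearMap.smul_apply,
          ContinuousLinearMap.smulRight_apply, innerSL_apply_apply, mul_smul]
      linear_combination (norm := module) -h2
    have h3 : ψ = (σ * ⟪e o, ψ⟫) • ((↑w⁻¹ : E →L[ℝ] E) (e o)) := by
      calc ψ = ((↑w⁻¹ : E →L[ℝ] E) * (↑w : E →L[ℝ] E)) ψ := by
              rw [w.inv_mul, ContinuousLinearMap.one_apply]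
        _ = (↑w⁻¹ : E →L[ℝ] E) ((↑w : E →L[ℝ] E) ψ) := rfl
        _ = (↑w⁻¹ : E →L[ℝ] E) ((σ * ⟪e o, ψ⟫) • e o) := by rw [h1]
        _ = (σ * ⟪e o, ψ⟫) • ((↑w⁻¹ : E →L[ℝ] E) (e o)) := map_smul _ _ _
    refine ⟨σ * ⟪e o, ψ⟫ * ts, ?_⟩
    calc ψ = (σ * ⟪e o, ψ⟫) • ((↑w⁻¹ : E →L[ℝ] E) (e o)) := h3
      _ = (σ * ⟪e o, ψ⟫) • (ts • φ) := by rw [hwinv']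
      _ = (σ * ⟪e o, ψ⟫ * ts) • φ := by rw [smul_smul]
      _ = (σ * ⟪e o, ψ⟫ * ts) • ∑' n : ℕ, (ρ⁻¹) ^ n • (A ^ n) (e o) := by rw [hφdef]
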